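/- Let G and G' be (possibly infinite) simple graphs without isolated vertices, with G connected and having at least 3 vertices. An edge isomorphism ψ : E(G) → E(G') is induced by a graph isomorphism G → G' if and only if ψ does not have a K3,K1,3-pair; moreover, when it is induced, the inducing graph isomorphism is unique. -/

import Mathlib

open SimpleGraph

/-- Two edges (elements of `Sym2 V`) share an endpoint. -/
def SharesEndpoint {V : Type*} (e f : Sym2 V) : Prop := ∃ v, v ∈ e ∧ v ∈ f

/-- `ψ` is an edge isomorphism: a bijection of edge sets such that two edges share an
endpoint iff their images share an endpoint. -/
def IsEdgeIsom {V V' : Type*} (G : SimpleGraph V) (G' : SimpleGraph V')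
    (ψ : G.edgeSet ≃ G'.edgeSet) : Prop :=
  ∀ e f : G.edgeSet, SharesEndpoint (e : Sym2 V) (f : Sym2 V) ↔
    SharesEndpoint (ψ e : Sym2 V') (ψ f : Sym2 V')

/-- A set of edges spans a triangle `K₃`. -/
def IsTriangleEdgeSet {V : Type*} (s : Set (Sym2 V)) : Prop :=
  ∃ a b c : V, a ≠ b ∧ a ≠ c ∧ b ≠ c ∧ s = {s(a, b), s(b, c), s(a, c)}

/-- A set of edges spans a 3-star `K_{1,3}` with center `c`. -/
def IsThreeStarEdgeSet {V : Type*} (s : Set (Sym2 V)) : Prop :=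
  ∃ c a b d : V, a ≠ b ∧ a ≠ d ∧ b ≠ d ∧ c ≠ a ∧ c ≠ b ∧ c ≠ d ∧
    s = {s(c, a), s(c, b), s(c, d)}

/-- `ψ` has a `K₃, K_{1,3}`-pair: a set `η` of edges of `G` such that the subgraph spanned
by `η` and the subgraph spanned by `ψ(η)` are a triangle and a 3-star, in either order. -/
def HasK3K13Pair {V V' : Type*} (G : SimpleGraph V) (G' : SimpleGraph V')
    (ψ : G.edgeSet ≃ G'.edgeSet) : Prop :=
  ∃ η : Set G.edgeSet,
    (IsTriangleEdgeSet ((fun e : G.edgeSet => (e : Sym2 V)) '' η) ∧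
      IsThreeStarEdgeSet ((fun e : G'.edgeSet => (e : Sym2 V')) '' (ψ '' η))) ∨
    (IsThreeStarEdgeSet ((fun e : G.edgeSet => (e : Sym2 V)) '' η) ∧
      IsTriangleEdgeSet ((fun e : G'.edgeSet => (e : Sym2 V')) '' (ψ '' η)))

/-- `ψ` is induced by the graph isomorphism `φ`. -/
def InducedByIso {V V' : Type*} (G : SimpleGraph V) (G' : SimpleGraph V')
    (ψ : G.edgeSet ≃ G'.edgeSet) (φ : G ≃g G') : Prop :=
  ∀ e : G.edgeSet, (ψ e : Sym2 V') = Sym2.map (⇑φ) (e : Sym2 V)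


lemma sym2_eq_of_two_mem {V : Type*} {e f : Sym2 V} {x y : V} (hxy : x ≠ y)
    (hxe : x ∈ e) (hye : y ∈ e) (hxf : x ∈ f) (hyf : y ∈ f) : e = f := by
  rw [(Sym2.mem_and_mem_iff hxy).1 ⟨hxe, hye⟩, (Sym2.mem_and_mem_iff hxy).1 ⟨hxf, hyf⟩]

lemma not_tri_and_star {V : Type*} {s : Set (Sym2 V)} (ht : IsTriangleEdgeSet s)
    (hs : IsThreeStarEdgeSet s) : False := by
  obtain ⟨a, b, c, hab, hac, hbc, rfl⟩ := ht
  obtain ⟨d, p, q, r, -, -, -, -, -, -, hs⟩ := hs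
  have hmem : ∀ x ∈ ({s(a, b), s(b, c), s(a, c)} : Set (Sym2 V)), d ∈ x := by
    rw [hs]; rintro x (rfl | rfl | rfl) <;> simp
  have h1 := hmem s(a,b) (by simp)
  have h2 := hmem s(b,c) (by simp [Set.mem_insert_iff])
  have h3 := hmem s(a,c) (by simp [Set.mem_insert_iff])
  rw [Sym2.mem_iff] at h1 h2 h3
  rcases h1 with rfl | rfl
  · rcases h2 with h | h <;> [exact hab h; exact hac h]
  · rcases h3 with h | h <;> [exact hab h.symm; exact hbc h]

lemma tri_map {V V' : Type*} {s : Set (Sym2 V)} {φ : V → V'} (hφ : Function.Injective φ)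
    (ht : IsTriangleEdgeSet s) : IsTriangleEdgeSet (Sym2.map φ '' s) := by
  obtain ⟨a, b, c, hab, hac, hbc, rfl⟩ := ht
  exact ⟨φ a, φ b, φ c, fun h => hab (hφ h), fun h => hac (hφ h), fun h => hbc (hφ h), by
    simp [Set.image_insert_eq]⟩

lemma star_map {V V' : Type*} {s : Set (Sym2 V)} {φ : V → V'} (hφ : Function.Injective φ)
    (ht : IsThreeStarEdgeSet s) : IsThreeStarEdgeSet (Sym2.map φ '' s) := by
  obtain ⟨c, a, b, d, h1, h2, h3, h4, h5, h6, rfl⟩ := ht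
  exact ⟨φ c, φ a, φ b, φ d, fun h => h1 (hφ h), fun h => h2 (hφ h), fun h => h3 (hφ h),
    fun h => h4 (hφ h), fun h => h5 (hφ h), fun h => h6 (hφ h), by
    simp [Set.image_insert_eq]⟩

lemma induced_no_pair {V V' : Type*} {G : SimpleGraph V} {G' : SimpleGraph V'}
    {ψ : G.edgeSet ≃ G'.edgeSet} (φ : G ≃g G') (hφ : InducedByIso G G' ψ φ) :
    ¬ HasK3K13Pair G G' ψ := by
  rintro ⟨η, h⟩
  have key : ((fun e : G'.edgeSet => (e : Sym2 V')) '' (ψ '' η)) =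
      Sym2.map (⇑φ) '' ((fun e : G.edgeSet => (e : Sym2 V)) '' η) := by
    rw [Set.image_image, Set.image_image]
    exact Set.image_congr fun e _ => hφ e
  rcases h with ⟨ht, hs⟩ | ⟨hs, ht⟩
  · exact not_tri_and_star (key ▸ tri_map φ.injective ht : IsTriangleEdgeSet _) (key ▸ hs)
  · exact not_tri_and_star (key ▸ ht) (key ▸ star_map φ.injective hs)

lemma neighbor_second_edge {V : Type*} {G : SimpleGraph V}
    (hconn : G.Connected) (h3 : ∃ f : Fin 3 → V, Function.Injective f)
    {v w : V} (hvw : G.Adj v w)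
    (hv : ∀ g : G.edgeSet, v ∈ (g : Sym2 V) → (g : Sym2 V) = s(v, w)) :
    ∃ f : G.edgeSet, w ∈ (f : Sym2 V) ∧ (f : Sym2 V) ≠ s(v, w) := by
  by_contra hcon
  push_neg at hcon
  have hw : ∀ g : G.edgeSet, w ∈ (g : Sym2 V) → (g : Sym2 V) = s(v, w) := hcon
  have hclosed : ∀ a b : V, G.Adj a b → a ∈ ({v, w} : Set V) → b ∈ ({v, w} : Set V) := by
    rintro a b hab (rfl | rfl)
    · have := hv ⟨s(a, b), hab⟩ (Sym2.mem_mk_left a b)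
      simp only [Sym2.eq, Sym2.rel_iff', Prod.mk.injEq, Prod.swap_prod_mk] at this
      rcases this with ⟨-, rfl⟩ | ⟨rfl, -⟩ <;>
        first | exact absurd hvw G.irrefl | simp
    · have := hw ⟨s(a, b), hab⟩ (Sym2.mem_mk_left a b)
      simp only [Sym2.eq, Sym2.rel_iff', Prod.mk.injEq, Prod.swap_prod_mk] at this
      rcases this with ⟨rfl, -⟩ | ⟨-, rfl⟩ <;>
        first | exact absurd hvw G.irrefl | simp
  have hall : ∀ u : V, u ∈ ({v, w} : Set V) := by
    intro u
    obtain ⟨p⟩ := hconn.preconnected v u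
    have : ∀ (a b : V) (q : G.Walk a b), a ∈ ({v, w} : Set V) → b ∈ ({v, w} : Set V) := by
      intro a b q
      induction q with
      | nil => exact id
      | cons h q ih => exact fun ha => ih (hclosed _ _ h ha)
    exact this v u p (by simp)
  obtain ⟨f, hf⟩ := h3
  have h0 := hall (f 0); have h1 := hall (f 1); have h2 := hall (f 2)
  simp only [Set.mem_insert_iff, Set.mem_singleton_iff] at h0 h1 h2
  rcases h0 with h0 | h0 <;> rcases h1 with h1 | h1 <;> rcases h2 with h2 | h2 <;>
    first
      | exact absurd (hf (h0.trans h1.symm)) (by decide)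
      | exact absurd (hf (h0.trans h2.symm)) (by decide)
      | exact absurd (hf (h1.trans h2.symm)) (by decide)

lemma star_all {V V' : Type*} {G : SimpleGraph V} {G' : SimpleGraph V'}
    {ψ : G.edgeSet ≃ G'.edgeSet} (hψ : IsEdgeIsom G G' ψ) (hnp : ¬ HasK3K13Pair G G' ψ)
    {v : V} {e f : G.edgeSet} (he : v ∈ (e : Sym2 V)) (hf : v ∈ (f : Sym2 V)) (hef : e ≠ f) :
    ∃ x : V', ∀ g : G.edgeSet, v ∈ (g : Sym2 V) → x ∈ (ψ g : Sym2 V') := by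
  obtain ⟨x, hxe, hxf⟩ := (hψ e f).1 ⟨v, he, hf⟩
  refine ⟨x, fun g hg => ?_⟩
  by_contra hxg
  obtain ⟨p, hpg, hpe⟩ := (hψ g e).1 ⟨v, hg, he⟩
  obtain ⟨q, hqg, hqf⟩ := (hψ g f).1 ⟨v, hg, hf⟩
  have hpx : p ≠ x := fun h => hxg (h ▸ hpg)
  have hqx : q ≠ x := fun h => hxg (h ▸ hqg)
  have hpq : p ≠ q := by
    rintro rfl
    exact hef (ψ.injective (Subtype.ext (sym2_eq_of_two_mem hpx hpe hxe hqf hxf)))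
  have nd : ∀ g' : G.edgeSet, ¬ (g' : Sym2 V).IsDiag :=
    fun g' => G.not_isDiag_of_mem_edgeSet g'.2
  have hge : g ≠ e := fun h => hxg (h ▸ hxe)
  have hgf : g ≠ f := fun h => hxg (h ▸ hxf)
  set a := Sym2.Mem.other he with ha_def
  set b := Sym2.Mem.other hf with hb_def
  set c := Sym2.Mem.other hg with hc_def
  have he' : s(v, a) = (e : Sym2 V) := Sym2.other_spec he
  have hf' : s(v, b) = (f : Sym2 V) := Sym2.other_spec hf
  have hg' : s(v, c) = (g : Sym2 V) := Sym2.other_spec hg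
  have hav : a ≠ v := Sym2.other_ne (nd e) he
  have hbv : b ≠ v := Sym2.other_ne (nd f) hf
  have hcv : c ≠ v := Sym2.other_ne (nd g) hg
  have hab : a ≠ b := fun h => hef (Subtype.ext ((h ▸ he' : s(v, b) = _).symm.trans hf'))
  have hac : a ≠ c := fun h => hge (Subtype.ext ((h.symm ▸ hg' : s(v, a) = _).symm.trans he'))
  have hbc : b ≠ c := fun h => hgf (Subtype.ext ((h.symm ▸ hg' : s(v, b) = _).symm.trans hf'))
  have hψe : (ψ e : Sym2 V') = s(x, p) := (Sym2.mem_and_mem_iff hpx.symm).1 ⟨hxe, hpe⟩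
  have hψf : (ψ f : Sym2 V') = s(x, q) := (Sym2.mem_and_mem_iff hqx.symm).1 ⟨hxf, hqf⟩
  have hψg : (ψ g : Sym2 V') = s(p, q) := (Sym2.mem_and_mem_iff hpq).1 ⟨hpg, hqg⟩
  refine hnp ⟨{e, f, g}, Or.inr ⟨⟨v, a, b, c, hab, hac, hbc, hav.symm, hbv.symm, hcv.symm, ?_⟩,
    ⟨p, x, q, hpx, hpq, hqx.symm, ?_⟩⟩⟩
  · simp only [Set.image_insert_eq, Set.image_singleton]
    rw [← he', ← hf', ← hg']
  · simp only [Set.image_insert_eq, Set.image_singleton]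
    rw [hψe, hψf, hψg, Sym2.eq_swap (a := x) (b := p)]

lemma exists_unique_P {V V' : Type*} {G : SimpleGraph V} {G' : SimpleGraph V'}
    {ψ : G.edgeSet ≃ G'.edgeSet} (hψ : IsEdgeIsom G G' ψ) (hnp : ¬ HasK3K13Pair G G' ψ)
    (hG : ∀ v : V, ∃ w, G.Adj v w) (hconn : G.Connected)
    (h3 : ∃ f : Fin 3 → V, Function.Injective f) (v : V) :
    ∃! x : V', ∀ g : G.edgeSet, v ∈ (g : Sym2 V) ↔ x ∈ (ψ g : Sym2 V') := by
  classical
  have nd : ∀ g' : G.edgeSet, ¬ (g' : Sym2 V).IsDiag :=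
    fun g' => G.not_isDiag_of_mem_edgeSet g'.2
  have nd' : ∀ g' : G'.edgeSet, ¬ (g' : Sym2 V').IsDiag :=
    fun g' => G'.not_isDiag_of_mem_edgeSet g'.2
  obtain ⟨w, hvw⟩ := hG v
  set e : G.edgeSet := ⟨s(v, w), hvw⟩ with he_def
  have hve : v ∈ (e : Sym2 V) := Sym2.mem_mk_left v w
  have hwe : w ∈ (e : Sym2 V) := Sym2.mem_mk_right v w
  by_cases hdeg : ∃ f : G.edgeSet, v ∈ (f : Sym2 V) ∧ f ≠ e
  · -- v has two distinct edges
    obtain ⟨f, hvf, hfe⟩ := hdeg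
    obtain ⟨x, hx⟩ := star_all hψ hnp hvf hve hfe
    have hxe : x ∈ (ψ e : Sym2 V') := hx e hve
    have hxf : x ∈ (ψ f : Sym2 V') := hx f hvf
    refine ⟨x, fun g => ⟨hx g, ?_⟩, fun y hy => ?_⟩
    · -- backward direction
      intro hxg
      by_contra hvg
      have hge : g ≠ e := fun h => hvg (h ▸ hve)
      have hgf : g ≠ f := fun h => hvg (h ▸ hvf)
      obtain ⟨u, hug, hue⟩ := (hψ g e).2 ⟨x, hxg, hxe⟩
      have hu : u = v ∨ u = w := Sym2.mem_iff.1 hue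
      rcases hu with rfl | rfl
      · exact hvg hug
      · -- w ∈ g
        set b := Sym2.Mem.other hvf with hb_def
        have hf' : s(v, b) = (f : Sym2 V) := Sym2.other_spec hvf
        have hbv : b ≠ v := Sym2.other_ne (nd f) hvf
        obtain ⟨u', hu'g, hu'f⟩ := (hψ g f).2 ⟨x, hxg, hxf⟩
        have hu' : u' = v ∨ u' = b := by rw [← hf'] at hu'f; exact Sym2.mem_iff.1 hu'f
        rcases hu' with rfl | rfl
        · exact hvg hu'g
        · -- u ∈ g is w, u' ∈ g is b
          have hwb : u ≠ b := by
            rintro rfl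
            exact hfe (Subtype.ext hf'.symm)
          have hg' : (g : Sym2 V) = s(u, b) := (Sym2.mem_and_mem_iff hwb).1 ⟨hug, hu'g⟩
          -- build the triangle {e, f, g} mapping to a star at x
          have hvu : v ≠ u := hvw.ne
          -- images
          set p := Sym2.Mem.other hxe with hp_def
          set q := Sym2.Mem.other hxf with hq_def
          have hxg' : x ∈ (ψ g : Sym2 V') := hxg
          set r := Sym2.Mem.other hxg' with hr_def
          have hpe : s(x, p) = (ψ e : Sym2 V') := Sym2.other_spec hxe
          have hqf : s(x, q) = (ψ f : Sym2 V') := Sym2.other_spec hxf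
          have hrg : s(x, r) = (ψ g : Sym2 V') := Sym2.other_spec hxg'
          have hpx : p ≠ x := Sym2.other_ne (nd' (ψ e)) hxe
          have hqx : q ≠ x := Sym2.other_ne (nd' (ψ f)) hxf
          have hrx : r ≠ x := Sym2.other_ne (nd' (ψ g)) hxg'
          have hpq : p ≠ q := by
            rintro h
            exact hfe (ψ.injective (Subtype.ext
              (sym2_eq_of_two_mem hpx (Sym2.other_mem hxe) hxe (h ▸ Sym2.other_mem hxf) hxf))).symm
          have hpr : p ≠ r := by
            rintro h
            exact hge (ψ.injective (Subtype.ext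
              (sym2_eq_of_two_mem hpx (Sym2.other_mem hxe) hxe (h ▸ Sym2.other_mem hxg') hxg'))).symm
          have hqr : q ≠ r := by
            rintro h
            exact hgf (ψ.injective (Subtype.ext
              (sym2_eq_of_two_mem hqx (Sym2.other_mem hxf) hxf (h ▸ Sym2.other_mem hxg') hxg'))).symm
          refine hnp ⟨{e, f, g}, Or.inl ⟨⟨v, u, b, hvu, hbv.symm, hwb, ?_⟩,
            ⟨x, p, q, r, hpq, hpr, hqr, hpx.symm, hqx.symm, hrx.symm, ?_⟩⟩⟩
          · simp only [Set.image_insert_eq, Set.image_singleton]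
            rw [← hf', hg']
            rw [Set.pair_comm]
          · simp only [Set.image_insert_eq, Set.image_singleton]
            rw [← hpe, ← hqf, ← hrg]
    · -- uniqueness
      by_contra hyx
      have hye : y ∈ (ψ e : Sym2 V') := (hy e).1 hve
      have hyf : y ∈ (ψ f : Sym2 V') := (hy f).1 hvf
      exact hfe (ψ.injective (Subtype.ext (sym2_eq_of_two_mem hyx hyf hxf hye hxe)))
  · -- v has a unique edge e
    push_neg at hdeg
    have hv : ∀ g : G.edgeSet, v ∈ (g : Sym2 V) → (g : Sym2 V) = s(v, w) :=
      fun g hg => congrArg Subtype.val (hdeg g hg)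
    obtain ⟨f, hwf, hfne⟩ := neighbor_second_edge hconn h3 hvw hv
    have hfe : f ≠ e := fun h => hfne (congrArg Subtype.val h)
    obtain ⟨xw, hxw⟩ := star_all hψ hnp hwf hwe hfe
    have hxwe : xw ∈ (ψ e : Sym2 V') := hxw e hwe
    have hxwf : xw ∈ (ψ f : Sym2 V') := hxw f hwf
    set y := Sym2.Mem.other hxwe with hy_def
    have hy' : s(xw, y) = (ψ e : Sym2 V') := Sym2.other_spec hxwe
    have hyxw : y ≠ xw := Sym2.other_ne (nd' (ψ e)) hxwe
    have hymem : y ∈ (ψ e : Sym2 V') := Sym2.other_mem hxwe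
    refine ⟨y, fun g => ⟨fun hg => ?_, fun hyg => ?_⟩, fun z hz => ?_⟩
    · rw [hdeg g hg]; exact hymem
    · by_cases hge : g = e
      · rw [hge]; exact hve
      · obtain ⟨u, hug, hue⟩ := (hψ g e).2 ⟨y, hyg, hymem⟩
        rcases (Sym2.mem_iff.1 hue : u = v ∨ u = w) with rfl | rfl
        · exact hug
        · exact absurd (ψ.injective (Subtype.ext
            (sym2_eq_of_two_mem hyxw hyg (hxw g hug) hymem hxwe))) hge
    · -- uniqueness
      have hze : z ∈ (ψ e : Sym2 V') := (hz e).1 hve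
      have hzxw : z ≠ xw := by
        rintro rfl
        exact hfe (hdeg f ((hz f).2 hxwf))
      rw [← hy'] at hze
      rcases Sym2.mem_iff.1 hze with h | h
      · exact absurd h hzxw
      · exact h

lemma sym2_exists_rep {V : Type*} (z : Sym2 V) : ∃ a b, z = s(a, b) := by
  induction z using Sym2.inductionOn with | hf x y => exact ⟨x, y, rfl⟩

/-- Whitney's theorem for possibly infinite graphs: if `G` is connected with at least 3
vertices and `G`, `G'` have no isolated vertices, an edge isomorphism `ψ` is induced by a
graph isomorphism iff it has no `K₃,K_{1,3}`-pair; moreover the inducing isomorphism is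
unique. -/
theorem whitney_infinite {V V' : Type*}
    (G : SimpleGraph V) (G' : SimpleGraph V')
    (hG : ∀ v : V, ∃ w, G.Adj v w) (hG' : ∀ v : V', ∃ w, G'.Adj v w)
    (hconn : G.Connected) (h3 : ∃ f : Fin 3 → V, Function.Injective f)
    (ψ : G.edgeSet ≃ G'.edgeSet) (hψ : IsEdgeIsom G G' ψ) :
    ((∃ φ : G ≃g G', InducedByIso G G' ψ φ) ↔ ¬ HasK3K13Pair G G' ψ) ∧
    (∀ φ φ' : G ≃g G', InducedByIso G G' ψ φ → InducedByIso G G' ψ φ' → φ = φ') := by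
  classical
  have hPiso : ∀ (χ : G ≃g G'), InducedByIso G G' ψ χ →
      ∀ (v : V) (g : G.edgeSet), v ∈ (g : Sym2 V) ↔ χ v ∈ (ψ g : Sym2 V') := by
    intro χ hχ v g
    obtain ⟨a, b, hab⟩ := sym2_exists_rep (g : Sym2 V)
    rw [hχ g, hab, Sym2.map_pair_eq, Sym2.mem_iff, Sym2.mem_iff]
    constructor
    · rintro (rfl | rfl)
      · exact Or.inl rfl
      · exact Or.inr rfl
    · rintro (h | h)
      · exact Or.inl (χ.injective h)
      · exact Or.inr (χ.injective h)
  have key : ¬ HasK3K13Pair G G' ψ → ∃ φ : G ≃g G', InducedByIso G G' ψ φ := by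
    intro hnp
    have huP := fun v => exists_unique_P hψ hnp hG hconn h3 v
    set φ0 : V → V' := fun v => (huP v).choose with hφ0
    have hP : ∀ (v : V) (g : G.edgeSet), v ∈ (g : Sym2 V) ↔ φ0 v ∈ (ψ g : Sym2 V') :=
      fun v => (huP v).choose_spec.1
    have nd : ∀ g' : G.edgeSet, ¬ (g' : Sym2 V).IsDiag :=
      fun g' => G.not_isDiag_of_mem_edgeSet g'.2
    -- two distinct vertices never share the same image
    have sep : ∀ a b : V, a ≠ b → φ0 a = φ0 b → False := by
      intro a b hab h
      have hiff : ∀ g' : G.edgeSet, a ∈ (g' : Sym2 V) ↔ b ∈ (g' : Sym2 V) :=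
        fun g' => (hP a g').trans (h ▸ (hP b g')).symm
      have honly : ∀ g' : G.edgeSet, a ∈ (g' : Sym2 V) → (g' : Sym2 V) = s(a, b) := by
        intro g' ha'
        exact (Sym2.mem_and_mem_iff hab).1 ⟨ha', (hiff g').1 ha'⟩
      obtain ⟨c, hac⟩ := hG a
      have hadj : G.Adj a b := by
        have h1 := honly ⟨s(a, c), hac⟩ (Sym2.mem_mk_left a c)
        rw [← SimpleGraph.mem_edgeSet, ← h1]
        exact hac
      obtain ⟨f, hbf, hfne⟩ := neighbor_second_edge hconn h3 hadj honly
      exact hfne (honly f ((hiff f).2 hbf))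
    have hinj : Function.Injective φ0 := by
      intro a b h
      by_contra hab
      exact sep a b hab h
    have mapE : ∀ (g : G.edgeSet) (a b : V), (g : Sym2 V) = s(a, b) →
        (ψ g : Sym2 V') = s(φ0 a, φ0 b) := by
      intro g a b hgab
      have hag : a ∈ (g : Sym2 V) := hgab ▸ Sym2.mem_mk_left a b
      have hbg : b ∈ (g : Sym2 V) := hgab ▸ Sym2.mem_mk_right a b
      have hab : a ≠ b := by
        intro h
        exact nd g (by rw [hgab, h]; exact Sym2.mk_isDiag_iff.2 rfl)
      have hne : φ0 a ≠ φ0 b := fun h => sep a b hab h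
      exact (Sym2.mem_and_mem_iff hne).1 ⟨(hP a g).1 hag, (hP b g).1 hbg⟩
    have hsurj : Function.Surjective φ0 := by
      intro x
      obtain ⟨y, hxy⟩ := hG' x
      obtain ⟨a, b, hab⟩ := sym2_exists_rep (ψ.symm ⟨s(x, y), hxy⟩ : Sym2 V)
      have h2 := mapE (ψ.symm ⟨s(x, y), hxy⟩) a b hab
      rw [Equiv.apply_symm_apply] at h2
      have hx : x ∈ ((⟨s(x, y), hxy⟩ : G'.edgeSet) : Sym2 V') := Sym2.mem_mk_left x y
      rw [h2] at hx
      rcases Sym2.mem_iff.1 hx with h | h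
      exacts [⟨a, h.symm⟩, ⟨b, h.symm⟩]
    refine ⟨⟨Equiv.ofBijective φ0 ⟨hinj, hsurj⟩, @fun a b => ?_⟩, ?_⟩
    · constructor
      · intro h'
        obtain ⟨p, q, hpq⟩ := sym2_exists_rep (ψ.symm ⟨s(φ0 a, φ0 b), h'⟩ : Sym2 V)
        have h2 := mapE (ψ.symm ⟨s(φ0 a, φ0 b), h'⟩) p q hpq
        rw [Equiv.apply_symm_apply] at h2
        have h3 : s(φ0 p, φ0 q) = s(φ0 a, φ0 b) := h2.symm
        rw [Sym2.eq_iff] at h3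
        have hpq' : s(p, q) = s(a, b) := by
          rcases h3 with ⟨h4, h5⟩ | ⟨h4, h5⟩
          · rw [hinj h4, hinj h5]
          · rw [hinj h4, hinj h5, Sym2.eq_swap]
        rw [← SimpleGraph.mem_edgeSet, ← hpq', ← hpq]
        exact (ψ.symm ⟨s(φ0 a, φ0 b), h'⟩).2
      · intro h
        have h2 := mapE ⟨s(a, b), h⟩ a b rfl
        have h3 := (ψ ⟨s(a, b), h⟩).2
        rw [h2] at h3
        exact h3
    · intro g
      obtain ⟨a, b, hab⟩ := sym2_exists_rep (g : Sym2 V)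
      rw [hab, Sym2.map_pair_eq]
      exact mapE g a b hab
  refine ⟨⟨fun ⟨φ, hφ⟩ => induced_no_pair φ hφ, key⟩, ?_⟩
  intro φ φ' hφ hφ'
  have hnp := induced_no_pair φ hφ
  have huP := fun v => exists_unique_P hψ hnp hG hconn h3 v
  have hvv : ∀ v, φ v = φ' v :=
    fun v => (huP v).unique (hPiso φ hφ v) (hPiso φ' hφ' v)
  ext v
  exact hvv v
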